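/- Let A be symmetric positive semi-definite with the property that every nonzero kernel vector has all components nonzero. If (v_m) is a sequence in ℝ^n with 2ε ≤ ‖v_m‖ ≤ 4ε for some ε > 0, and the n-th component (v_m)_n → 0, then liminf_{m→∞} dist(v_m, ker A) > 0. -/
import Mathlib


open Matrix Filter

/-- if `A` is an `(n+1)×(n+1)` symmetric positive semi-definite matrix whose
nonzero kernel vectors have all components nonzero, and `(vₘ)` satisfies
`2ε ≤ ‖vₘ‖ ≤ 4ε` with `ε > 0` while the last component `(vₘ)ₙ → 0`, then
`liminf dist(vₘ, ker A) > 0`. -/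
theorem liminf_dist_kernel_pos (n : ℕ) (A : Matrix (Fin (n+1)) (Fin (n+1)) ℝ)
    (hA : A.PosSemidef)
    (hker : ∀ w : Fin (n+1) → ℝ, A.mulVec w = 0 → w ≠ 0 → ∀ i, w i ≠ 0)
    (v : ℕ → Fin (n+1) → ℝ) (ε : ℝ) (hε : 0 < ε)
    (hlow : ∀ m, 2 * ε ≤ ‖v m‖) (hup : ∀ m, ‖v m‖ ≤ 4 * ε)
    (hlast : Tendsto (fun m => v m (Fin.last n)) atTop (nhds 0)) :
    0 < liminf (fun m => Metric.infDist (v m) {w : Fin (n+1) → ℝ | A.mulVec w = 0}) atTop := by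
  set K : Set (Fin (n+1) → ℝ) := {w | A.mulVec w = 0} with hK
  have hK0 : (0 : Fin (n+1) → ℝ) ∈ K := by simp [hK, Matrix.mulVec_zero]
  have hKne : K.Nonempty := ⟨0, hK0⟩
  have hKclosed : IsClosed K := by
    have : Continuous fun w : Fin (n+1) → ℝ => A.mulVec w := by
      exact A.mulVecLin.continuous_of_finiteDimensional
    exact isClosed_eq this continuous_const
  -- projection
  set P : (Fin (n+1) → ℝ) → (Fin (n+1) → ℝ) := fun x => Function.update x (Fin.last n) 0 with hP
  have hPle : ∀ x : Fin (n+1) → ℝ, ‖P x‖ ≤ ‖x‖ := by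
    intro x
    rw [pi_norm_le_iff_of_nonneg (norm_nonneg x)]
    intro i
    by_cases h : i = Fin.last n
    · simp [hP, h, norm_nonneg]
    · simp [hP, Function.update_of_ne h]
      exact norm_le_pi_norm x i
  have hPd : ∀ x : Fin (n+1) → ℝ, dist x (P x) ≤ |x (Fin.last n)| := by
    intro x
    rw [dist_eq_norm, pi_norm_le_iff_of_nonneg (abs_nonneg _)]
    intro i
    by_cases h : i = Fin.last n
    · simp [hP, h]
    · simp [hP, Function.update_of_ne h, abs_nonneg]
  have hPge : ∀ x : Fin (n+1) → ℝ, |x (Fin.last n)| ≤ ε → 2*ε ≤ ‖x‖ → 2*ε ≤ ‖P x‖ := by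
    intro x h1 h2
    have hx : ‖x‖ ≤ max ‖P x‖ ε := by
      rw [pi_norm_le_iff_of_nonneg (le_max_of_le_right hε.le)]
      intro i
      by_cases h : i = Fin.last n
      · subst h; exact le_max_of_le_right (by simpa using h1)
      · refine le_max_of_le_left ?_
        have := norm_le_pi_norm (P x) i
        simpa [hP, Function.update_of_ne h] using this
    rcases le_max_iff.mp hx with h | h
    · linarith
    · linarith
  -- compact set
  set C : Set (Fin (n+1) → ℝ) :=
    {x | ε ≤ ‖x‖ ∧ ‖x‖ ≤ 5*ε ∧ x (Fin.last n) = 0} with hC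
  have hCcomp : IsCompact C := by
    apply Metric.isCompact_of_isClosed_isBounded
    · apply IsClosed.inter (isClosed_le continuous_const continuous_norm)
      exact IsClosed.inter (isClosed_le continuous_norm continuous_const)
        (isClosed_eq (continuous_apply _) continuous_const)
    · apply Bornology.IsBounded.subset (Metric.isBounded_closedBall (x := (0:Fin (n+1) → ℝ)) (r := 5*ε))
      intro x hx
      simp only [Metric.mem_closedBall, dist_zero_right]
      exact hx.2.1
  -- eventually small last coordinate
  have hsmall0 : ∀ δ : ℝ, 0 < δ → ∀ᶠ m in atTop, |v m (Fin.last n)| < δ := by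
    intro δ hδ
    have := hlast.eventually (Metric.ball_mem_nhds (0:ℝ) hδ)
    simpa [Real.dist_eq] using this
  have hPC : ∀ m, |v m (Fin.last n)| ≤ ε → P (v m) ∈ C := by
    intro m hm
    refine ⟨?_, ?_, ?_⟩
    · have := hPge (v m) hm (hlow m); linarith
    · have := hPle (v m); have := hup m; linarith
    · simp [hP]
  obtain ⟨m₀, hm₀⟩ := (hsmall0 ε hε).exists
  have hCne : C.Nonempty := ⟨P (v m₀), hPC m₀ hm₀.le⟩
  obtain ⟨x₀, hx₀C, hmin⟩ :=
    hCcomp.exists_isMinOn hCne ((Metric.continuous_infDist_pt K).continuousOn)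
  set c := Metric.infDist x₀ K with hc
  have hcpos : 0 < c := by
    rw [hc, ← (hKclosed.notMem_iff_infDist_pos hKne)]
    intro hmem
    have hx0ne : x₀ ≠ 0 := by
      intro h
      rw [h] at hx₀C
      have h1 : ε ≤ ‖(0 : Fin (n+1) → ℝ)‖ := hx₀C.1
      rw [norm_zero] at h1
      linarith
    exact hker x₀ hmem hx0ne (Fin.last n) hx₀C.2.2
  have hev : ∀ᶠ m in atTop, c/2 ≤ Metric.infDist (v m) K := by
    filter_upwards [hsmall0 (min ε (c/2)) (lt_min hε (by linarith))] with m hm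
    have h1 : |v m (Fin.last n)| ≤ ε := (hm.trans_le (min_le_left _ _)).le
    have h2 : |v m (Fin.last n)| ≤ c/2 := (hm.trans_le (min_le_right _ _)).le
    have hmemC := hPC m h1
    have hle : c ≤ Metric.infDist (P (v m)) K := hmin hmemC
    have htri : Metric.infDist (P (v m)) K ≤ Metric.infDist (v m) K + dist (P (v m)) (v m) :=
      Metric.infDist_le_infDist_add_dist
    have hd : dist (P (v m)) (v m) ≤ c/2 := by
      rw [dist_comm]; exact (hPd (v m)).trans h2
    linarith
  have hco : IsCoboundedUnder (· ≥ ·) atTop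
      (fun m => Metric.infDist (v m) K) := by
    apply isCoboundedUnder_ge_of_le atTop (x := 4*ε)
    intro m
    calc Metric.infDist (v m) K ≤ dist (v m) 0 := Metric.infDist_le_dist_of_mem hK0
    _ = ‖v m‖ := by rw [dist_zero_right]
    _ ≤ 4*ε := hup m
  have := le_liminf_of_le hco hev
  linarith
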